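/- Let two investors have equal initial wealth a > 0 and per-period returns −1 < r₁ < r₂, let τ_k ∈ (0,1) and τ_a ∈ (0,1), and let n ≥ 1 be a number of periods. Compounding the after-tax growth factors over n periods, the n-period wealth ratio under the wealth tax is ((1 − τ_a)(1 + r₂))ⁿ / ((1 − τ_a)(1 + r₁))ⁿ = ((1 + r₂)/(1 + r₁))ⁿ, the wealth tax rate cancelling entirely, whereas under the capital income tax the n-period wealth ratio satisfies ((1 + (1 − τ_k)r₂)/(1 + (1 − τ_k)r₁))ⁿ < ((1 + r₂)/(1 + r₁))ⁿ. Hence over repeated periods the divergence of relative wealth is strictly faster under the stock tax than under the flow tax. -/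
import Mathlib


/-- Over `n` compounded periods, the wealth-tax rate cancels from the wealth
ratio, whereas the capital income tax strictly compresses the `n`-period
wealth ratio: relative divergence is strictly faster under the stock tax. -/
theorem compounded_divergence_stock_vs_flow
    (a r₁ r₂ τk τa : ℝ) (n : ℕ) (ha : 0 < a) (hr₁ : -1 < r₁) (hr₁₂ : r₁ < r₂)
    (hτk : τk ∈ Set.Ioo (0 : ℝ) 1) (hτa : τa ∈ Set.Ioo (0 : ℝ) 1) (hn : 1 ≤ n) :
    ((1 - τa) * (1 + r₂)) ^ n / ((1 - τa) * (1 + r₁)) ^ n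
      = ((1 + r₂) / (1 + r₁)) ^ n ∧
    ((1 + (1 - τk) * r₂) / (1 + (1 - τk) * r₁)) ^ n
      < ((1 + r₂) / (1 + r₁)) ^ n := by
  obtain ⟨hk0, hk1⟩ := hτk
  obtain ⟨ha0, ha1⟩ := hτa
  have h1 : (0:ℝ) < 1 + r₁ := by linarith
  have h2 : (0:ℝ) < 1 + r₂ := by linarith
  have hta : (0:ℝ) < 1 - τa := by linarith
  have hk1' : (0:ℝ) < 1 - τk := by linarith
  have hd1 : (0:ℝ) < 1 + (1 - τk) * r₁ := by nlinarith
  have hd2 : (0:ℝ) < 1 + (1 - τk) * r₂ := by nlinarith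
  constructor
  · rw [div_pow, mul_pow, mul_pow, mul_div_mul_left]
    positivity
  · apply pow_lt_pow_left₀ _ (by positivity) (by omega)
    rw [div_lt_div_iff₀ hd1 h1]
    nlinarith
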